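/- Let K be a field and r ≥ 1, and let Γ = K⟨α,β⟩/(α², β², (αβ)^r − (βα)^r). The center Z(Γ) has K-dimension r+3, with basis {1, (αβ)^r, (αβ)^k + (βα)^k for 1 ≤ k ≤ r−1, (αβ)^{r−1}α, (βα)^{r−1}β}. -/

import Mathlib

set_option maxHeartbeats 1000000

open FreeAlgebra

/-- Relations of `Γ(1,1;r) = K⟨α,β⟩/(α², β², (αβ)^r - (βα)^r)`. -/
def gammaRelR (K : Type*) [Field K] (r : ℕ) :
    FreeAlgebra K (Fin 2) → FreeAlgebra K (Fin 2) → Prop :=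
  fun x y =>
    (x = ι K 0 * ι K 0 ∧ y = 0) ∨ (x = ι K 1 * ι K 1 ∧ y = 0) ∨
    (x = (ι K 0 * ι K 1) ^ r ∧ y = (ι K 1 * ι K 0) ^ r)

/-- The family `1, (αβ)^k + (βα)^k (1 ≤ k ≤ r-1), (αβ)^{r-1}α, (βα)^{r-1}β, (αβ)^r`
in `Γ(1,1;r)`. -/
noncomputable def centerFam (K : Type*) [Field K] (r : ℕ) :
    Fin (r + 3) → RingQuot (gammaRelR K r) := fun i =>
  let a := RingQuot.mkAlgHom K (gammaRelR K r) (ι K 0)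
  let b := RingQuot.mkAlgHom K (gammaRelR K r) (ι K 1)
  if (i : ℕ) = 0 then 1
  else if (i : ℕ) < r then (a * b) ^ (i : ℕ) + (b * a) ^ (i : ℕ)
  else if (i : ℕ) = r then (a * b) ^ (r - 1) * a
  else if (i : ℕ) = r + 1 then (b * a) ^ (r - 1) * b
  else (a * b) ^ r

namespace Stmt15

/-- Index type for the basis of `Γ(1,1;r)`: the unit, ω = (αβ)^r, and the
alternating word of length `n+1` starting with letter `s` (false = α, true = β). -/
inductive Idx : Type where
  | un : Idx
  | om : Idx
  | wd : Bool → ℕ → Idx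
deriving DecidableEq

open Idx

/-- The letter at position `n` (0-based) of the alternating word starting with `s`;
equivalently the first letter of the continuation after `n` letters. -/
def par (s : Bool) (n : ℕ) : Bool := xor s (decide (n % 2 = 1))

lemma par_zero (s : Bool) : par s 0 = s := by simp [par]

lemma par_not (s : Bool) (n : ℕ) : par (!s) n = !(par s n) := by
  cases s <;> simp [par]

lemma par_succ (s : Bool) (n : ℕ) : par s (n+1) = !(par s n) := by
  rcases Nat.mod_two_eq_zero_or_one n with h | h <;> cases s <;>
    simp [par, Nat.add_mod, h]

lemma par_even (s : Bool) (n : ℕ) (h : n % 2 = 0) : par s n = s := by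
  cases s <;> simp [par, h]

lemma par_odd (s : Bool) (n : ℕ) (h : n % 2 = 1) : par s n = !s := by
  cases s <;> simp [par, h]

/-- Length of the basis element indexed by `i`. -/
def len (r : ℕ) : Idx → ℕ
  | un => 0
  | om => 2 * r
  | wd _ n => n + 1

/-- Left multiplication by generator `t` on basis indices. -/
def step (r : ℕ) (t : Bool) : Idx → Option Idx
  | un => some (wd t 0)
  | om => none
  | wd s n =>
      if t = s then none
      else if n + 2 ≤ 2 * r - 1 then some (wd t (n + 1))
      else if n + 2 = 2 * r then some om
      else none

lemma step_step {r : ℕ} {t : Bool} {i j : Idx} (h : step r t i = some j) :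
    step r t j = none := by
  cases i with
  | un =>
    simp only [step, Option.some.injEq] at h
    subst h; simp [step]
  | om => simp [step] at h
  | wd s n =>
    simp only [step] at h
    split_ifs at h with h1 h2 h3 <;> simp only [Option.some.injEq] at h <;>
      subst h <;> simp [step]

lemma step_len {r : ℕ} (hr : 1 ≤ r) {t : Bool} {i j : Idx} (h : step r t i = some j) :
    len r j = len r i + 1 ∧ len r j ≤ 2 * r := by
  cases i with
  | un =>
    simp only [step, Option.some.injEq] at h
    subst h; simp [len]; omega
  | om => simp [step] at h
  | wd s n =>
    simp only [step] at h
    split_ifs at h with h1 h2 h3 <;> simp only [Option.some.injEq] at h <;>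
      subst h <;> simp [len] <;> omega



variable (K : Type*) [Field K] (r : ℕ)

abbrev Alg := RingQuot (gammaRelR K r)

noncomputable def gen (t : Bool) : Alg K r :=
  RingQuot.mkAlgHom K (gammaRelR K r) (ι K (if t then 1 else 0))

lemma gen_false : RingQuot.mkAlgHom K (gammaRelR K r) (ι K 0) = gen K r false := rfl
lemma gen_true : RingQuot.mkAlgHom K (gammaRelR K r) (ι K 1) = gen K r true := rfl

/-- The alternating word of length `n` starting with letter `s`. -/
noncomputable def W : ℕ → Bool → Alg K r
  | 0, _ => 1
  | n+1, s => gen K r s * W n (!s)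

lemma W_zero (s : Bool) : W K r 0 s = 1 := rfl

lemma W_succ (n : ℕ) (s : Bool) : W K r (n+1) s = gen K r s * W K r n (!s) := by rw [W]

lemma W_one (s : Bool) : W K r 1 s = gen K r s := by
  rw [W_succ, W_zero, mul_one]

lemma gen_sq (t : Bool) : gen K r t * gen K r t = 0 := by
  cases t
  · have h : gammaRelR K r (ι K 0 * ι K 0) 0 := Or.inl ⟨rfl, rfl⟩
    have := RingQuot.mkAlgHom_rel K h
    simpa [gen, map_mul] using this
  · have h : gammaRelR K r (ι K 1 * ι K 1) 0 := Or.inr (Or.inl ⟨rfl, rfl⟩)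
    have := RingQuot.mkAlgHom_rel K h
    simpa [gen, map_mul] using this

lemma rel_pow : (gen K r false * gen K r true) ^ r = (gen K r true * gen K r false) ^ r := by
  have h : gammaRelR K r ((ι K 0 * ι K 1) ^ r) ((ι K 1 * ι K 0) ^ r) :=
    Or.inr (Or.inr ⟨rfl, rfl⟩)
  have := RingQuot.mkAlgHom_rel K h
  simpa [gen, map_mul, map_pow] using this

lemma W_add : ∀ n, ∀ (s : Bool), ∀ m, W K r n s * W K r m (par s n) = W K r (n + m) s := by
  intro n
  induction n with
  | zero => intro s m; rw [par_zero, W_zero, one_mul, Nat.zero_add]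
  | succ n ih =>
    intro s m
    have h1 : par s (n+1) = par (!s) n := by rw [par_succ, par_not]
    rw [W_succ, h1, mul_assoc, ih (!s) m, ← W_succ]
    congr 1
    omega

lemma W_gen_cat (n : ℕ) (s : Bool) : W K r n s * gen K r (par s n) = W K r (n+1) s := by
  have := W_add K r n s 1
  rwa [W_one] at this

lemma W_gen_zero (n : ℕ) (s : Bool) : W K r (n+1) s * gen K r (!(par s (n+1))) = 0 := by
  have h : (!(par s (n+1))) = par s n := by rw [par_succ, Bool.not_not]
  rw [h, ← W_gen_cat K r n s, mul_assoc, gen_sq, mul_zero]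

lemma gen_W_ne (n : ℕ) (t : Bool) : gen K r t * W K r n (!t) = W K r (n+1) t :=
  (W_succ K r n t).symm

lemma gen_W_eq (n : ℕ) (hn : 1 ≤ n) (t : Bool) : gen K r t * W K r n t = 0 := by
  obtain ⟨m, rfl⟩ : ∃ m, n = m + 1 := ⟨n - 1, by omega⟩
  rw [W_succ, ← mul_assoc, gen_sq, zero_mul]

lemma Wab : ∀ k, (gen K r false * gen K r true) ^ k = W K r (2*k) false := by
  intro k
  induction k with
  | zero => simp [W_zero]
  | succ k ih =>
    rw [pow_succ', ih]
    have h2 : 2*(k+1) = (2*k+1)+1 := by omega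
    rw [h2, W_succ, W_succ, mul_assoc]
    norm_num

lemma Wba : ∀ k, (gen K r true * gen K r false) ^ k = W K r (2*k) true := by
  intro k
  induction k with
  | zero => simp [W_zero]
  | succ k ih =>
    rw [pow_succ', ih]
    have h2 : 2*(k+1) = (2*k+1)+1 := by omega
    rw [h2, W_succ, W_succ, mul_assoc]
    norm_num

lemma omega_eq : W K r (2*r) true = W K r (2*r) false := by
  rw [← Wab, ← Wba, rel_pow]

lemma W_top (hr : 1 ≤ r) (s : Bool) : W K r (2*r+1) s = 0 := by
  have h0 : W K r (2*r) s = W K r (2*r) (!s) := by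
    cases s
    · exact (omega_eq K r).symm
    · exact omega_eq K r
  have h1 : W K r (2*r+1) s = W K r (2*r) s * gen K r (par s (2*r)) := (W_gen_cat K r _ s).symm
  have h2 : par s (2*r) = s := par_even s _ (by omega)
  obtain ⟨m, hm⟩ : ∃ m, 2*r = m + 1 := ⟨2*r - 1, by omega⟩
  have h3 : (!(par (!s) (2*r))) = s := by
    rw [par_even (!s) _ (by omega), Bool.not_not]
  rw [h1, h2, h0]
  rw [hm] at h3 ⊢
  have h4 := W_gen_zero K r m (!s)
  rwa [h3] at h4

lemma W_long (hr : 1 ≤ r) (n : ℕ) (hn : 2*r + 1 ≤ n) (s : Bool) : W K r n s = 0 := by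
  obtain ⟨m, rfl⟩ : ∃ m, n = (2*r+1) + m := ⟨n - (2*r+1), by omega⟩
  rw [← W_add K r (2*r+1) s m, W_top K r hr, zero_mul]

lemma Wmul (n m : ℕ) (hn : 1 ≤ n) (hm : 1 ≤ m) (s t : Bool) :
    W K r n s * W K r m t = if t = par s n then W K r (n+m) s else 0 := by
  split_ifs with h
  · rw [h]; exact W_add K r n s m
  · have ht : t = !(par s n) := Bool.eq_not_of_ne h
    obtain ⟨m', rfl⟩ : ∃ m', m = m' + 1 := ⟨m - 1, by omega⟩
    obtain ⟨n', rfl⟩ : ∃ n', n = n' + 1 := ⟨n - 1, by omega⟩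
    rw [ht, ← gen_W_ne K r m' (!(par s (n'+1))), Bool.not_not, ← mul_assoc,
      W_gen_zero, zero_mul]



end Stmt15

open Finsupp Stmt15.Idx

namespace Stmt15

variable (K : Type*) [Field K] (r : ℕ)

/-- The `4r`-dimensional representation space (with junk basis indices). -/
abbrev V := Idx →₀ K

lemma step_un (t : Bool) : step r t un = some (wd t 0) := rfl
lemma step_om (t : Bool) : step r t om = none := rfl
lemma step_wd (t s : Bool) (n : ℕ) :
    step r t (wd s n) = if t = s then none else if n + 2 ≤ 2*r - 1 then some (wd t (n+1))
      else if n + 2 = 2*r then some om else none := rfl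

lemma bool_ne_not (t : Bool) : ¬ (t = !t) := by cases t <;> simp
lemma bool_not_ne (t : Bool) : ¬ ((!t) = t) := by cases t <;> simp

/-- Left multiplication by generator `t`, as a linear endomorphism. -/
noncomputable def Lop (t : Bool) : V K →ₗ[K] V K :=
  Finsupp.lift (V K) K Idx (fun i => (step r t i).elim 0 fun j => Finsupp.single j 1)

lemma Lop_single (t : Bool) (i : Idx) (c : K) :
    Lop K r t (Finsupp.single i c) =
      c • ((step r t i).elim 0 fun j => Finsupp.single j (1:K)) := by
  simp [Lop, Finsupp.lift_apply, Finsupp.sum_single_index]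

lemma Lop_single_some {t : Bool} {i j : Idx} (h : step r t i = some j) (c : K) :
    Lop K r t (Finsupp.single i c) = Finsupp.single j c := by
  rw [Lop_single, h]
  simp [Finsupp.smul_single]

lemma Lop_single_none {t : Bool} {i : Idx} (h : step r t i = none) (c : K) :
    Lop K r t (Finsupp.single i c) = 0 := by
  rw [Lop_single, h]
  simp

lemma Lsq (t : Bool) : (Lop K r t) ∘ₗ (Lop K r t) = 0 := by
  apply Finsupp.lhom_ext
  intro i c
  rw [LinearMap.comp_apply]
  rcases h : step r t i with _ | j
  · rw [Lop_single_none K r h]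
    simp
  · rw [Lop_single_some K r h, Lop_single_none K r (step_step h)]
    rfl

lemma vanish (hr : 1 ≤ r) (t : Bool) :
    ∀ k, 1 ≤ k → ∀ (i : Idx) (c : K), 2*r < len r i + 2*k →
    ((Lop K r t * Lop K r (!t) : Module.End K (V K)) ^ k) (Finsupp.single i c) = 0 := by
  intro k hk
  induction k, hk using Nat.le_induction with
  | base =>
    intro i c hlen
    rw [pow_one, Module.End.mul_apply]
    rcases h1 : step r (!t) i with _ | j
    · rw [Lop_single_none K r h1, map_zero]
    · rw [Lop_single_some K r h1]
      rcases h2 : step r t j with _ | l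
      · rw [Lop_single_none K r h2]
      · exfalso
        have e1 := step_len hr h1
        have e2 := step_len hr h2
        omega
  | succ k hk ih =>
    intro i c hlen
    rw [pow_succ, Module.End.mul_apply]
    rcases h1 : step r (!t) i with _ | j
    · rw [Module.End.mul_apply, Lop_single_none K r h1, map_zero, map_zero]
    · rw [Module.End.mul_apply, Lop_single_some K r h1]
      rcases h2 : step r t j with _ | l
      · rw [Lop_single_none K r h2, map_zero]
      · rw [Lop_single_some K r h2]
        have e1 := step_len hr h1
        have e2 := step_len hr h2
        exact ih l c (by omega)

lemma iter_un (hr : 1 ≤ r) (t : Bool) :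
    ∀ k, 1 ≤ k → k ≤ r →
    ((Lop K r t * Lop K r (!t) : Module.End K (V K)) ^ k) (Finsupp.single un (1:K)) =
      Finsupp.single (if 2*k = 2*r then om else wd t (2*k-1)) 1 := by
  intro k hk
  induction k, hk using Nat.le_induction with
  | base =>
    intro _
    rw [pow_one, Module.End.mul_apply, Lop_single_some K r (step_un r (!t)) 1]
    have hs := step_wd r t (!t) 0
    rw [if_neg (bool_ne_not t)] at hs
    by_cases h1 : (0:ℕ) + 2 ≤ 2*r - 1
    · rw [if_pos h1] at hs
      rw [Lop_single_some K r hs, if_neg (by omega)]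
    · rw [if_neg h1, if_pos (by omega)] at hs
      rw [Lop_single_some K r hs, if_pos (by omega)]
  | succ k hk ih =>
    intro hk1
    rw [pow_succ', Module.End.mul_apply, ih (by omega), if_neg (by omega),
      Module.End.mul_apply]
    have hs1 := step_wd r (!t) t (2*k-1)
    rw [if_neg (bool_not_ne t), if_pos (by omega : 2*k-1+2 ≤ 2*r-1)] at hs1
    rw [Lop_single_some K r hs1]
    have he : (2*k-1)+1 = 2*k := by omega
    rw [he]
    have hs2 := step_wd r t (!t) (2*k)
    rw [if_neg (bool_ne_not t)] at hs2
    by_cases h2 : 2*k + 2 ≤ 2*r - 1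
    · rw [if_pos h2] at hs2
      rw [Lop_single_some K r hs2, if_neg (by omega)]
      have h3 : 2*(k+1)-1 = 2*k+1 := by omega
      rw [h3]
    · rw [if_neg h2, if_pos (by omega)] at hs2
      rw [Lop_single_some K r hs2, if_pos (by omega)]

lemma End_rel (hr : 1 ≤ r) :
    ((Lop K r false * Lop K r true : Module.End K (V K)))^r =
      (Lop K r true * Lop K r false)^r := by
  apply Finsupp.lhom_ext
  intro i c
  have hc : (Finsupp.single i c : V K) = c • Finsupp.single i 1 := by
    rw [Finsupp.smul_single, smul_eq_mul, mul_one]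
  rw [hc, map_smul, map_smul]
  congr 1
  have h1 := iter_un K r hr false r hr le_rfl
  have h2 := iter_un K r hr true r hr le_rfl
  simp only [Bool.not_false, Bool.not_true] at h1 h2
  cases i with
  | un =>
    rw [h1, h2]
    simp
  | om =>
    have v1 := vanish K r hr false r hr om 1 (by simp only [len]; omega)
    have v2 := vanish K r hr true r hr om 1 (by simp only [len]; omega)
    simp only [Bool.not_false, Bool.not_true] at v1 v2
    rw [v1, v2]
  | wd s n =>
    have v1 := vanish K r hr false r hr (wd s n) 1 (by simp only [len]; omega)
    have v2 := vanish K r hr true r hr (wd s n) 1 (by simp only [len]; omega)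
    simp only [Bool.not_false, Bool.not_true] at v1 v2
    rw [v1, v2]

noncomputable def phi0 : FreeAlgebra K (Fin 2) →ₐ[K] Module.End K (V K) :=
  FreeAlgebra.lift K (fun i : Fin 2 => if i = 0 then Lop K r false else Lop K r true)

lemma phi0_i0 : phi0 K r (FreeAlgebra.ι K 0) = Lop K r false := by
  simp [phi0]

lemma phi0_i1 : phi0 K r (FreeAlgebra.ι K 1) = Lop K r true := by
  simp [phi0]

lemma phi0_rel (hr : 1 ≤ r) : ∀ ⦃x y⦄, gammaRelR K r x y → phi0 K r x = phi0 K r y := by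
  rintro x y (⟨rfl, rfl⟩ | ⟨rfl, rfl⟩ | ⟨rfl, rfl⟩)
  · rw [map_mul, phi0_i0, map_zero, Module.End.mul_eq_comp, Lsq]
  · rw [map_mul, phi0_i1, map_zero, Module.End.mul_eq_comp, Lsq]
  · rw [map_pow, map_pow, map_mul, map_mul, phi0_i0, phi0_i1]
    exact End_rel K r hr

noncomputable def rho (hr : 1 ≤ r) : Alg K r →ₐ[K] Module.End K (V K) :=
  RingQuot.liftAlgHom K ⟨phi0 K r, phi0_rel K r hr⟩

lemma rho_gen (hr : 1 ≤ r) (t : Bool) : rho K r hr (gen K r t) = Lop K r t := by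
  cases t
  · show rho K r hr (RingQuot.mkAlgHom K (gammaRelR K r) (FreeAlgebra.ι K 0)) = _
    rw [rho, RingQuot.liftAlgHom_mkAlgHom_apply, phi0_i0]
  · show rho K r hr (RingQuot.mkAlgHom K (gammaRelR K r) (FreeAlgebra.ι K 1)) = _
    rw [rho, RingQuot.liftAlgHom_mkAlgHom_apply, phi0_i1]

/-- Coordinates: evaluate the representation on the basis vector at `un`. -/
noncomputable def theta (hr : 1 ≤ r) : Alg K r →ₗ[K] V K :=
  (LinearMap.applyₗ (Finsupp.single un (1:K))).comp (rho K r hr).toLinearMap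

lemma theta_apply (hr : 1 ≤ r) (x : Alg K r) :
    theta K r hr x = rho K r hr x (Finsupp.single un 1) := rfl

lemma theta_one (hr : 1 ≤ r) : theta K r hr 1 = Finsupp.single un 1 := by
  rw [theta_apply, map_one, Module.End.one_apply]

lemma theta_gen_mul (hr : 1 ≤ r) (t : Bool) (x : Alg K r) :
    theta K r hr (gen K r t * x) = Lop K r t (theta K r hr x) := by
  rw [theta_apply, map_mul, rho_gen, Module.End.mul_apply, theta_apply]

lemma theta_W (hr : 1 ≤ r) :
    ∀ n, ∀ s : Bool, n + 1 ≤ 2*r →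
    theta K r hr (W K r (n+1) s) =
      Finsupp.single (if n + 1 = 2*r then om else wd s n) 1 := by
  intro n
  induction n with
  | zero =>
    intro s h
    rw [if_neg (by omega)]
    have h1 : W K r 1 s = gen K r s * 1 := by rw [W_one, mul_one]
    rw [h1, theta_gen_mul, theta_one, Lop_single_some K r (step_un r s)]
  | succ n ih =>
    intro s h
    rw [W_succ, theta_gen_mul, ih (!s) (by omega), if_neg (by omega : ¬ (n+1 = 2*r))]
    have hs := step_wd r s (!s) n
    rw [if_neg (bool_ne_not s)] at hs
    by_cases h2 : n + 2 ≤ 2*r - 1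
    · rw [if_pos h2] at hs
      rw [Lop_single_some K r hs, if_neg (by omega)]
    · rw [if_neg h2, if_pos (by omega)] at hs
      rw [Lop_single_some K r hs, if_pos (by omega)]

end Stmt15
namespace Stmt15

variable (K : Type*) [Field K] (r : ℕ)

noncomputable def Efun : Idx → Alg K r
  | un => 1
  | om => W K r (2*r) false
  | wd s n => if n + 2 ≤ 2*r then W K r (n+1) s else 0

lemma Efun_un : Efun K r un = 1 := rfl
lemma Efun_om : Efun K r om = W K r (2*r) false := rfl
lemma Efun_wd (s : Bool) (n : ℕ) :
    Efun K r (wd s n) = if n + 2 ≤ 2*r then W K r (n+1) s else 0 := rfl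

def gd (i : Idx) : Prop :=
  match i with
  | un => True
  | om => True
  | wd _ n => n + 2 ≤ 2*r

lemma gd_un : gd r un := trivial
lemma gd_om : gd r om := trivial
lemma gd_wd {s : Bool} {n : ℕ} (h : n + 2 ≤ 2*r) : gd r (wd s n) := h

def S0 : Set (Alg K r) := {x | ∃ n ≤ 2*r, ∃ s, x = W K r n s}

lemma S0_mul_mem (hr : 1 ≤ r) {x y : Alg K r} (hx : x ∈ S0 K r) (hy : y ∈ S0 K r) :
    x * y ∈ Submodule.span K (S0 K r) := by
  obtain ⟨n, hn, s, rfl⟩ := hx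
  obtain ⟨m, hm, t, rfl⟩ := hy
  rcases Nat.eq_zero_or_pos n with rfl | hn1
  · rw [W_zero, one_mul]; exact Submodule.subset_span ⟨m, hm, t, rfl⟩
  rcases Nat.eq_zero_or_pos m with rfl | hm1
  · rw [W_zero, mul_one]; exact Submodule.subset_span ⟨n, hn, s, rfl⟩
  rw [Wmul K r n m hn1 hm1]
  split_ifs with h
  · by_cases h2 : n + m ≤ 2*r
    · exact Submodule.subset_span ⟨n+m, h2, s, rfl⟩
    · rw [W_long K r hr (n+m) (by omega)]
      exact Submodule.zero_mem _
  · exact Submodule.zero_mem _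

lemma adjoin_gens : Algebra.adjoin K
    ((RingQuot.mkAlgHom K (gammaRelR K r) : FreeAlgebra K (Fin 2) →ₐ[K] Alg K r) ''
      Set.range (FreeAlgebra.ι K)) = ⊤ := by
  rw [← AlgHom.map_adjoin, FreeAlgebra.adjoin_range_ι, Algebra.map_top]
  exact (AlgHom.range_eq_top _).mpr (RingQuot.mkAlgHom_surjective K _)

lemma span_S0 (hr : 1 ≤ r) : Submodule.span K (S0 K r) = ⊤ := by
  have hmul : ∀ x y : Alg K r, x ∈ Submodule.span K (S0 K r) →
      y ∈ Submodule.span K (S0 K r) → x * y ∈ Submodule.span K (S0 K r) := by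
    intro x y hx hy
    have h1 : Submodule.span K (S0 K r) * Submodule.span K (S0 K r) ≤
        Submodule.span K (S0 K r) := by
      rw [Submodule.span_mul_span, Submodule.span_le]
      rintro z hz
      rw [Set.mem_mul] at hz
      obtain ⟨a, ha, b, hb, rfl⟩ := hz
      exact S0_mul_mem K r hr ha hb
    exact h1 (Submodule.mul_mem_mul hx hy)
  have h1 : (1 : Alg K r) ∈ Submodule.span K (S0 K r) :=
    Submodule.subset_span ⟨0, by omega, false, (W_zero K r false).symm⟩
  have htop : (Submodule.span K (S0 K r)).toSubalgebra h1 hmul = ⊤ := by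
    rw [eq_top_iff, ← adjoin_gens K r]
    apply Algebra.adjoin_le
    rintro z ⟨w, ⟨i, rfl⟩, rfl⟩
    show RingQuot.mkAlgHom K (gammaRelR K r) (FreeAlgebra.ι K i) ∈
      Submodule.span K (S0 K r)
    fin_cases i
    · exact Submodule.subset_span ⟨1, by omega, false,
        by rw [W_one]; exact (gen_false K r).symm⟩
    · exact Submodule.subset_span ⟨1, by omega, true,
        by rw [W_one]; exact (gen_true K r).symm⟩
  rw [eq_top_iff]
  intro x _
  have hx : x ∈ (Submodule.span K (S0 K r)).toSubalgebra h1 hmul := by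
    rw [htop]; trivial
  exact hx

noncomputable def Psi : V K →ₗ[K] Alg K r := Finsupp.lift (Alg K r) K Idx (Efun K r)

lemma Psi_single (i : Idx) (c : K) : Psi K r (Finsupp.single i c) = c • Efun K r i := by
  simp [Psi, Finsupp.lift_apply, Finsupp.sum_single_index]

lemma Psi_theta (hr : 1 ≤ r) (x : Alg K r) : Psi K r (theta K r hr x) = x := by
  have h : (Psi K r) ∘ₗ (theta K r hr) = LinearMap.id := by
    apply LinearMap.ext_on (span_S0 K r hr)
    rintro x ⟨n, hn, s, rfl⟩
    rw [LinearMap.comp_apply, LinearMap.id_apply]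
    rcases Nat.eq_zero_or_pos n with rfl | hn1
    · rw [W_zero, theta_one, Psi_single, Efun_un, one_smul]
    · obtain ⟨n', rfl⟩ : ∃ n', n = n'+1 := ⟨n-1, by omega⟩
      rw [theta_W K r hr n' s hn, Psi_single, one_smul]
      split_ifs with h2
      · rw [Efun_om, h2]
        cases s
        · rfl
        · exact (omega_eq K r).symm
      · rw [Efun_wd, if_pos (by omega)]
  have := congrArg (fun f => f x) h
  simpa using this

lemma theta_good (hr : 1 ≤ r) (x : Alg K r) {i : Idx} (hi : ¬ gd r i) :
    theta K r hr x i = 0 := by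
  have hx : theta K r hr x ∈ Submodule.map (theta K r hr) ⊤ := ⟨x, trivial, rfl⟩
  rw [← span_S0 K r hr, Submodule.map_span] at hx
  have hle : Submodule.span K (theta K r hr '' S0 K r) ≤
      LinearMap.ker (Finsupp.lapply i) := by
    rw [Submodule.span_le]
    rintro z ⟨w, ⟨n, hn, s, rfl⟩, rfl⟩
    rw [SetLike.mem_coe, LinearMap.mem_ker, Finsupp.lapply_apply]
    rcases Nat.eq_zero_or_pos n with rfl | hn1
    · rw [W_zero, theta_one]
      exact Finsupp.single_eq_of_ne (fun h => hi (h ▸ gd_un r))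
    · obtain ⟨n', rfl⟩ : ∃ n', n = n'+1 := ⟨n-1, by omega⟩
      rw [theta_W K r hr n' s hn]
      apply Finsupp.single_eq_of_ne
      split_ifs with h2
      · exact fun h => hi (h ▸ gd_om r)
      · exact fun h => hi (h ▸ gd_wd r (by omega))
  have hz := hle hx
  rw [LinearMap.mem_ker, Finsupp.lapply_apply] at hz
  exact hz

/-- Right multiplication by generator `t` on basis indices. -/
def rstep (t : Bool) : Idx → Option Idx
  | un => some (wd t 0)
  | om => none
  | wd s n =>
      if t = par s (n+1) then
        (if n + 3 ≤ 2*r then some (wd s (n+1)) else if n + 2 = 2*r then some om else none)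
      else none

lemma rstep_un (t : Bool) : rstep r t un = some (wd t 0) := rfl
lemma rstep_om (t : Bool) : rstep r t om = none := rfl
lemma rstep_wd (t s : Bool) (n : ℕ) :
    rstep r t (wd s n) = if t = par s (n+1) then
        (if n + 3 ≤ 2*r then some (wd s (n+1)) else if n + 2 = 2*r then some om else none)
      else none := rfl

noncomputable def Rop (t : Bool) : V K →ₗ[K] V K :=
  Finsupp.lift (V K) K Idx (fun i => (rstep r t i).elim 0 fun j => Finsupp.single j 1)

lemma Rop_single (t : Bool) (i : Idx) (c : K) :
    Rop K r t (Finsupp.single i c) =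
      c • ((rstep r t i).elim 0 fun j => Finsupp.single j (1:K)) := by
  simp [Rop, Finsupp.lift_apply, Finsupp.sum_single_index]

lemma Rop_single_some {t : Bool} {i j : Idx} (h : rstep r t i = some j) (c : K) :
    Rop K r t (Finsupp.single i c) = Finsupp.single j c := by
  rw [Rop_single, h]
  simp [Finsupp.smul_single]

lemma Rop_single_none {t : Bool} {i : Idx} (h : rstep r t i = none) (c : K) :
    Rop K r t (Finsupp.single i c) = 0 := by
  rw [Rop_single, h]
  simp

lemma theta_mul_gen (hr : 1 ≤ r) (t : Bool) (x : Alg K r) :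
    theta K r hr (x * gen K r t) = Rop K r t (theta K r hr x) := by
  have h : (theta K r hr) ∘ₗ (LinearMap.mulRight K (gen K r t)) =
      (Rop K r t) ∘ₗ (theta K r hr) := by
    apply LinearMap.ext_on (span_S0 K r hr)
    rintro x ⟨n, hn, s, rfl⟩
    rw [LinearMap.comp_apply, LinearMap.comp_apply, LinearMap.mulRight_apply]
    rcases Nat.eq_zero_or_pos n with rfl | hn1
    · rw [W_zero, one_mul, theta_one, Rop_single_some K r (rstep_un r t) 1]
      have h0 := theta_W K r hr 0 t (by omega)
      rw [if_neg (by omega)] at h0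
      rw [← W_one K r t]
      exact h0
    · obtain ⟨n', rfl⟩ : ∃ n', n = n'+1 := ⟨n-1, by omega⟩
      rw [theta_W K r hr n' s hn]
      by_cases hom : n'+1 = 2*r
      · rw [if_pos hom, Rop_single_none K r (rstep_om r t) 1]
        by_cases hpt : t = par s (n'+1)
        · rw [hpt, W_gen_cat]
          have : W K r (n'+1+1) s = 0 := by
            rw [show n'+1+1 = 2*r+1 by omega]
            exact W_top K r hr s
          rw [this, map_zero]
        · rw [Bool.eq_not_of_ne hpt, W_gen_zero, map_zero]
      · rw [if_neg hom]
        have hrst := rstep_wd r t s n'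
        by_cases hpt : t = par s (n'+1)
        · have hcat : W K r (n'+1) s * gen K r t = W K r (n'+1+1) s := by
            rw [hpt]; exact W_gen_cat K r (n'+1) s
          rw [hcat]
          rw [if_pos hpt] at hrst
          by_cases h3 : n' + 3 ≤ 2*r
          · rw [if_pos h3] at hrst
            rw [Rop_single_some K r hrst 1]
            have h4 := theta_W K r hr (n'+1) s (by omega)
            rw [if_neg (by omega)] at h4
            exact h4
          · rw [if_neg h3, if_pos (by omega)] at hrst
            rw [Rop_single_some K r hrst 1]
            have h4 := theta_W K r hr (n'+1) s (by omega)
            rw [if_pos (by omega)] at h4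
            exact h4
        · rw [if_neg hpt] at hrst
          rw [Rop_single_none K r hrst 1, Bool.eq_not_of_ne hpt, W_gen_zero, map_zero]
  have := congrArg (fun f => f (W K r 0 true * x)) h
  simp only [LinearMap.comp_apply, LinearMap.mulRight_apply, W_zero, one_mul] at this
  exact this

end Stmt15
namespace Stmt15

variable (K : Type*) [Field K] (r : ℕ)

lemma Lop_coeff_of (t : Bool) (j i0 : Idx) (h : ∀ i, step r t i = some j ↔ i = i0)
    (c : V K) : (Lop K r t c) j = c i0 := by
  induction c using Finsupp.induction_linear with
  | zero => simp
  | add f g hf hg => rw [map_add, Finsupp.add_apply, hf, hg, Finsupp.add_apply]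
  | single i b =>
    rcases hs : step r t i with _ | j'
    · rw [Lop_single_none K r hs, Finsupp.zero_apply]
      refine (Finsupp.single_eq_of_ne' fun he => ?_).symm
      rw [he, (h i0).mpr rfl] at hs
      exact Option.some_ne_none _ hs
    · rw [Lop_single_some K r hs]
      by_cases hji : j' = j
      · subst hji
        have hii : i = i0 := (h i).mp hs
        subst hii
        rw [Finsupp.single_eq_same, Finsupp.single_eq_same]
      · rw [Finsupp.single_eq_of_ne' hji]
        refine (Finsupp.single_eq_of_ne' fun he => ?_).symm
        subst he
        rw [(h i).mpr rfl] at hs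
        exact hji (Option.some.inj hs).symm
  -- note: last line may need adjusting

lemma Lop_coeff_none (t : Bool) (j : Idx) (h : ∀ i, ¬ step r t i = some j)
    (c : V K) : (Lop K r t c) j = 0 := by
  induction c using Finsupp.induction_linear with
  | zero => simp
  | add f g hf hg => rw [map_add, Finsupp.add_apply, hf, hg, add_zero]
  | single i b =>
    rcases hs : step r t i with _ | j'
    · rw [Lop_single_none K r hs, Finsupp.zero_apply]
    · rw [Lop_single_some K r hs]
      refine Finsupp.single_eq_of_ne fun he => ?_
      subst he
      exact h i hs

lemma Rop_coeff_of (t : Bool) (j i0 : Idx) (h : ∀ i, rstep r t i = some j ↔ i = i0)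
    (c : V K) : (Rop K r t c) j = c i0 := by
  induction c using Finsupp.induction_linear with
  | zero => simp
  | add f g hf hg => rw [map_add, Finsupp.add_apply, hf, hg, Finsupp.add_apply]
  | single i b =>
    rcases hs : rstep r t i with _ | j'
    · rw [Rop_single_none K r hs, Finsupp.zero_apply]
      refine (Finsupp.single_eq_of_ne' fun he => ?_).symm
      rw [he, (h i0).mpr rfl] at hs
      exact Option.some_ne_none _ hs
    · rw [Rop_single_some K r hs]
      by_cases hji : j' = j
      · subst hji
        have hii : i = i0 := (h i).mp hs
        subst hii
        rw [Finsupp.single_eq_same, Finsupp.single_eq_same]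
      · rw [Finsupp.single_eq_of_ne' hji]
        refine (Finsupp.single_eq_of_ne' fun he => ?_).symm
        subst he
        rw [(h i).mpr rfl] at hs
        exact hji (Option.some.inj hs).symm

lemma Rop_coeff_none (t : Bool) (j : Idx) (h : ∀ i, ¬ rstep r t i = some j)
    (c : V K) : (Rop K r t c) j = 0 := by
  induction c using Finsupp.induction_linear with
  | zero => simp
  | add f g hf hg => rw [map_add, Finsupp.add_apply, hf, hg, add_zero]
  | single i b =>
    rcases hs : rstep r t i with _ | j'
    · rw [Rop_single_none K r hs, Finsupp.zero_apply]
    · rw [Rop_single_some K r hs]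
      refine Finsupp.single_eq_of_ne fun he => ?_
      subst he
      exact h i hs

lemma locL (t : Bool) (n : ℕ) (h3 : n + 3 ≤ 2*r) :
    ∀ i, step r t i = some (wd t (n+1)) ↔ i = wd (!t) n := by
  intro i
  cases i with
  | un =>
    rw [step_un]
    cases t <;> simp [Idx.wd.injEq] <;> omega
  | om => rw [step_om]; cases t <;> simp
  | wd s m =>
    rw [step_wd]
    cases t <;> cases s <;> split_ifs with h1 h2 <;>
      simp_all [Idx.wd.injEq] <;> omega

lemma locR_some (t : Bool) (n : ℕ) (h3 : n + 3 ≤ 2*r) (hodd : n % 2 = 1) :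
    ∀ i, rstep r t i = some (wd t (n+1)) ↔ i = wd t n := by
  intro i
  cases i with
  | un =>
    rw [rstep_un]
    cases t <;> simp [Idx.wd.injEq] <;> omega
  | om => rw [rstep_om]; cases t <;> simp
  | wd s m =>
    rw [rstep_wd]
    cases t <;> cases s <;> split_ifs with h1 h2 h3' <;>
      simp_all [Idx.wd.injEq, par, Nat.add_mod] <;> omega

lemma locR_none (t : Bool) (n : ℕ) (heven : n % 2 = 0) :
    ∀ i, ¬ rstep r t i = some (wd t (n+1)) := by
  intro i
  cases i with
  | un =>
    rw [rstep_un]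
    cases t <;> simp [Idx.wd.injEq] <;> omega
  | om => rw [rstep_om]; cases t <;> simp
  | wd s m =>
    rw [rstep_wd]
    cases t <;> cases s <;> split_ifs with h1 h2 h3' <;>
      simp_all [Idx.wd.injEq, par, Nat.add_mod] <;> omega

end Stmt15
namespace Stmt15

variable (K : Type*) [Field K] (r : ℕ)

lemma cf_0 (j : Fin (r+3)) (h : (j:ℕ) = 0) : centerFam K r j = 1 := by
  simp only [centerFam]
  rw [if_pos h]

lemma cf_mid (j : Fin (r+3)) (h0 : (j:ℕ) ≠ 0) (h1 : (j:ℕ) < r) :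
    centerFam K r j = W K r (2*(j:ℕ)) false + W K r (2*(j:ℕ)) true := by
  simp only [centerFam]
  rw [if_neg h0, if_pos h1, gen_false, gen_true, Wab, Wba]

lemma cf_r (hr : 1 ≤ r) (j : Fin (r+3)) (h : (j:ℕ) = r) :
    centerFam K r j = W K r (2*r-1) false := by
  simp only [centerFam]
  rw [if_neg (by omega), if_neg (by omega), if_pos h, gen_false, gen_true, Wab]
  have h2 := W_gen_cat K r (2*(r-1)) false
  rw [par_even false _ (by omega)] at h2
  rw [show 2*r-1 = 2*(r-1)+1 from by omega]
  exact h2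

lemma cf_r1 (hr : 1 ≤ r) (j : Fin (r+3)) (h : (j:ℕ) = r + 1) :
    centerFam K r j = W K r (2*r-1) true := by
  simp only [centerFam]
  rw [if_neg (by omega), if_neg (by omega), if_neg (by omega), if_pos h,
    gen_false, gen_true, Wba]
  have h2 := W_gen_cat K r (2*(r-1)) true
  rw [par_even true _ (by omega)] at h2
  rw [show 2*r-1 = 2*(r-1)+1 from by omega]
  exact h2

lemma cf_last (hr : 1 ≤ r) (j : Fin (r+3)) (h : (j:ℕ) = r + 2) :
    centerFam K r j = W K r (2*r) false := by
  simp only [centerFam]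
  rw [if_neg (by omega), if_neg (by omega), if_neg (by omega), if_neg (by omega),
    gen_false, gen_true, Wab]

lemma theta_cf (hr : 1 ≤ r) (j : Fin (r+3)) :
    theta K r hr (centerFam K r j) =
      if (j:ℕ) = 0 then Finsupp.single un 1
      else if (j:ℕ) < r then
        Finsupp.single (wd false (2*(j:ℕ)-1)) 1 + Finsupp.single (wd true (2*(j:ℕ)-1)) 1
      else if (j:ℕ) = r then Finsupp.single (wd false (2*r-2)) 1
      else if (j:ℕ) = r+1 then Finsupp.single (wd true (2*r-2)) 1
      else Finsupp.single om 1 := by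
  have hlt := j.isLt
  by_cases h0 : (j:ℕ) = 0
  · rw [if_pos h0, cf_0 K r j h0, theta_one]
  rw [if_neg h0]
  by_cases h1 : (j:ℕ) < r
  · rw [if_pos h1, cf_mid K r j h0 h1, map_add]
    have e1 := theta_W K r hr (2*(j:ℕ)-1) false (by omega)
    have e2 := theta_W K r hr (2*(j:ℕ)-1) true (by omega)
    rw [show 2*(j:ℕ)-1+1 = 2*(j:ℕ) from by omega] at e1 e2
    rw [if_neg (show ¬ (2*(j:ℕ) = 2*r) from by omega)] at e1 e2
    rw [e1, e2]
  rw [if_neg h1]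
  by_cases h2 : (j:ℕ) = r
  · rw [if_pos h2, cf_r K r hr j h2]
    have e1 := theta_W K r hr (2*r-2) false (by omega)
    rw [show 2*r-2+1 = 2*r-1 from by omega] at e1
    rw [if_neg (show ¬ (2*r-1 = 2*r) from by omega)] at e1
    rw [e1]
  rw [if_neg h2]
  by_cases h3 : (j:ℕ) = r+1
  · rw [if_pos h3, cf_r1 K r hr j h3]
    have e1 := theta_W K r hr (2*r-2) true (by omega)
    rw [show 2*r-2+1 = 2*r-1 from by omega] at e1
    rw [if_neg (show ¬ (2*r-1 = 2*r) from by omega)] at e1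
    rw [e1]
  · rw [if_neg h3, cf_last K r hr j (by omega)]
    have e1 := theta_W K r hr (2*r-1) false (by omega)
    rw [show 2*r-1+1 = 2*r from by omega] at e1
    rw [if_pos rfl] at e1
    rw [e1]

def pick (j : Fin (r+3)) : Idx :=
  if (j:ℕ) = 0 then un
  else if (j:ℕ) < r then wd false (2*(j:ℕ)-1)
  else if (j:ℕ) = r then wd false (2*r-2)
  else if (j:ℕ) = r+1 then wd true (2*r-2)
  else om

lemma single_eval (a i : Idx) : (Finsupp.single a (1:K)) i = if i = a then 1 else 0 := by
  rw [Finsupp.single_apply]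
  exact if_congr eq_comm rfl rfl

lemma D_eval (hr : 1 ≤ r) (j : Fin (r+3)) (i : Idx) :
    theta K r hr (centerFam K r j) i =
      if i = pick r j ∨ ((j:ℕ) ≠ 0 ∧ (j:ℕ) < r ∧ i = wd true (2*(j:ℕ)-1)) then 1 else 0 := by
  have hlt := j.isLt
  rw [theta_cf K r hr j]
  unfold pick
  by_cases h0 : (j:ℕ) = 0
  · rw [if_pos h0, if_pos h0, single_eval]
    by_cases hi : i = un
    · rw [if_pos hi, if_pos (Or.inl hi)]
    · rw [if_neg hi, if_neg (by rintro (h | ⟨h1, h2, h3⟩); exact hi h; exact h1 h0)]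
  rw [if_neg h0, if_neg h0]
  by_cases h1 : (j:ℕ) < r
  · rw [if_pos h1, if_pos h1, Finsupp.add_apply, single_eval, single_eval]
    by_cases hif : i = wd false (2*(j:ℕ)-1)
    · rw [if_pos hif, if_neg (by rw [hif]; simp), if_pos (Or.inl hif), add_zero]
    · rw [if_neg hif, zero_add]
      by_cases hit : i = wd true (2*(j:ℕ)-1)
      · rw [if_pos hit, if_pos (Or.inr ⟨h0, h1, hit⟩)]
      · rw [if_neg hit, if_neg (by rintro (h | ⟨ha, hb, hc⟩); exact hif h; exact hit hc)]
  rw [if_neg h1, if_neg h1]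
  by_cases h2 : (j:ℕ) = r
  · rw [if_pos h2, if_pos h2, single_eval]
    by_cases hi : i = wd false (2*r-2)
    · rw [if_pos hi, if_pos (Or.inl hi)]
    · rw [if_neg hi, if_neg (by rintro (h | ⟨ha, hb, hc⟩); exact hi h; exact h1 hb)]
  rw [if_neg h2, if_neg h2]
  by_cases h3 : (j:ℕ) = r+1
  · rw [if_pos h3, if_pos h3, single_eval]
    by_cases hi : i = wd true (2*r-2)
    · rw [if_pos hi, if_pos (Or.inl hi)]
    · rw [if_neg hi, if_neg (by rintro (h | ⟨ha, hb, hc⟩); exact hi h; exact h1 hb)]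
  · rw [if_neg h3, if_neg h3, single_eval]
    by_cases hi : i = om
    · rw [if_pos hi, if_pos (Or.inl hi)]
    · rw [if_neg hi, if_neg (by rintro (h | ⟨ha, hb, hc⟩); exact hi h; exact h1 hb)]

lemma pick_cond (hr : 1 ≤ r) (j j0 : Fin (r+3)) :
    (pick r j0 = pick r j ∨ ((j:ℕ) ≠ 0 ∧ (j:ℕ) < r ∧ pick r j0 = wd true (2*(j:ℕ)-1)))
      ↔ j = j0 := by
  have hlt := j.isLt
  have hlt0 := j0.isLt
  constructor
  · intro h
    unfold pick at h
    split_ifs at h <;>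
      rcases h with h | ⟨ha, hb, h⟩ <;>
      simp_all [Idx.wd.injEq, -Fin.val_eq_zero_iff] <;>
      exact Fin.ext (by omega)
  · rintro rfl
    exact Or.inl rfl

lemma cf_indep (hr : 1 ≤ r) : LinearIndependent K (centerFam K r) := by
  rw [Fintype.linearIndependent_iff]
  intro g hg j0
  have h1 : (theta K r hr) (∑ j, g j • centerFam K r j) = 0 := by rw [hg, map_zero]
  rw [map_sum] at h1
  simp_rw [map_smul] at h1
  have h2 := DFunLike.congr_fun h1 (pick r j0)
  rw [Finsupp.finset_sum_apply] at h2
  simp only [Finsupp.smul_apply, smul_eq_mul, Finsupp.zero_apply] at h2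
  simp_rw [D_eval K r hr, pick_cond r hr, mul_ite, mul_one, mul_zero] at h2
  rw [Finset.sum_ite_eq' Finset.univ j0 g] at h2
  simpa using h2

lemma comm_gen (hr : 1 ≤ r) (j : Fin (r+3)) (t : Bool) :
    gen K r t * centerFam K r j = centerFam K r j * gen K r t := by
  have hlt := j.isLt
  by_cases h0 : (j:ℕ) = 0
  · rw [cf_0 K r j h0, one_mul, mul_one]
  by_cases h1 : (j:ℕ) < r
  · rw [cf_mid K r j h0 h1, mul_add, add_mul]
    have hj1 : 1 ≤ 2*(j:ℕ) := by omega
    obtain ⟨m, hm⟩ : ∃ m, 2*(j:ℕ) = m+1 := ⟨2*(j:ℕ)-1, by omega⟩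
    cases t
    · have e1 : gen K r false * W K r (2*(j:ℕ)) false = 0 := gen_W_eq K r _ hj1 false
      have e2 : gen K r false * W K r (2*(j:ℕ)) true = W K r (2*(j:ℕ)+1) false :=
        gen_W_ne K r _ false
      have e3 : W K r (2*(j:ℕ)) false * gen K r false = W K r (2*(j:ℕ)+1) false := by
        have h := W_gen_cat K r (2*(j:ℕ)) false
        rwa [par_even false _ (by omega)] at h
      have e4 : W K r (2*(j:ℕ)) true * gen K r false = 0 := by
        have h := W_gen_zero K r m true
        rw [← hm, par_even true _ (by omega)] at h
        simpa using h
      rw [e1, e2, e3, e4, zero_add, add_zero]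
    · have e1 : gen K r true * W K r (2*(j:ℕ)) true = 0 := gen_W_eq K r _ hj1 true
      have e2 : gen K r true * W K r (2*(j:ℕ)) false = W K r (2*(j:ℕ)+1) true :=
        gen_W_ne K r _ true
      have e3 : W K r (2*(j:ℕ)) true * gen K r true = W K r (2*(j:ℕ)+1) true := by
        have h := W_gen_cat K r (2*(j:ℕ)) true
        rwa [par_even true _ (by omega)] at h
      have e4 : W K r (2*(j:ℕ)) false * gen K r true = 0 := by
        have h := W_gen_zero K r m false
        rw [← hm, par_even false _ (by omega)] at h
        simpa using h
      rw [e1, e2, e3, e4, zero_add, add_zero]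
  obtain ⟨m, hm⟩ : ∃ m, 2*r-1 = m+1 := ⟨2*r-2, by omega⟩
  by_cases h2 : (j:ℕ) = r
  · rw [cf_r K r hr j h2]
    cases t
    · have e1 : gen K r false * W K r (2*r-1) false = 0 := gen_W_eq K r _ (by omega) false
      have e2 : W K r (2*r-1) false * gen K r false = 0 := by
        have h := W_gen_zero K r m false
        rw [← hm, par_odd false _ (by omega)] at h
        simpa using h
      rw [e1, e2]
    · have e1 : gen K r true * W K r (2*r-1) false = W K r (2*r-1+1) true :=
        gen_W_ne K r _ true
      have e2 : W K r (2*r-1) false * gen K r true = W K r (2*r-1+1) false := by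
        have h := W_gen_cat K r (2*r-1) false
        rwa [par_odd false _ (by omega)] at h
      rw [e1, e2, show 2*r-1+1 = 2*r from by omega, omega_eq]
  by_cases h3 : (j:ℕ) = r+1
  · rw [cf_r1 K r hr j h3]
    cases t
    · have e1 : gen K r false * W K r (2*r-1) true = W K r (2*r-1+1) false :=
        gen_W_ne K r _ false
      have e2 : W K r (2*r-1) true * gen K r false = W K r (2*r-1+1) true := by
        have h := W_gen_cat K r (2*r-1) true
        rwa [par_odd true _ (by omega)] at h
      rw [e1, e2, show 2*r-1+1 = 2*r from by omega, omega_eq]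
    · have e1 : gen K r true * W K r (2*r-1) true = 0 := gen_W_eq K r _ (by omega) true
      have e2 : W K r (2*r-1) true * gen K r true = 0 := by
        have h := W_gen_zero K r m true
        rw [← hm, par_odd true _ (by omega)] at h
        simpa using h
      rw [e1, e2]
  · rw [cf_last K r hr j (by omega)]
    obtain ⟨m', hm'⟩ : ∃ m', 2*r = m'+1 := ⟨2*r-1, by omega⟩
    cases t
    · have e1 : gen K r false * W K r (2*r) false = 0 := gen_W_eq K r _ (by omega) false
      have e2 : W K r (2*r) false * gen K r false = 0 := by
        have h := W_gen_cat K r (2*r) false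
        rw [par_even false _ (by omega)] at h
        rw [h]
        exact W_top K r hr false
      rw [e1, e2]
    · have e1 : gen K r true * W K r (2*r) false = 0 := by
        rw [← omega_eq]
        exact gen_W_eq K r _ (by omega) true
      have e2 : W K r (2*r) false * gen K r true = 0 := by
        have h := W_gen_zero K r m' false
        rw [← hm', par_even false _ (by omega)] at h
        simpa using h
      rw [e1, e2]

lemma cf_center (hr : 1 ≤ r) (j : Fin (r+3)) :
    centerFam K r j ∈ Subalgebra.center K (Alg K r) := by
  rw [Subalgebra.mem_center_iff]
  intro y
  have htop : Subalgebra.centralizer K {centerFam K r j} = ⊤ := by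
    rw [eq_top_iff, ← adjoin_gens K r]
    apply Algebra.adjoin_le
    rintro z ⟨w, ⟨i, rfl⟩, rfl⟩
    rw [SetLike.mem_coe, Subalgebra.mem_centralizer_iff]
    rintro g hg
    rw [Set.mem_singleton_iff] at hg
    subst hg
    fin_cases i
    · exact (comm_gen K r hr j false).symm
    · exact (comm_gen K r hr j true).symm
  have hy : y ∈ Subalgebra.centralizer K {centerFam K r j} := by rw [htop]; trivial
  have hy2 := (Subalgebra.mem_centralizer_iff (R := K)).mp hy
  exact (hy2 _ rfl).symm

lemma center_le_span (hr : 1 ≤ r) :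
    Subalgebra.toSubmodule (Subalgebra.center K (Alg K r)) ≤
      Submodule.span K (Set.range (centerFam K r)) := by
  intro x hx
  rw [Subalgebra.mem_toSubmodule, Subalgebra.mem_center_iff] at hx
  have hcomm : ∀ t, Lop K r t (theta K r hr x) = Rop K r t (theta K r hr x) := by
    intro t
    rw [← theta_gen_mul K r hr t x, hx (gen K r t), theta_mul_gen K r hr t x]
  set c := theta K r hr x with hc
  have con1 : ∀ n, n % 2 = 1 → n+3 ≤ 2*r → c (wd true n) = c (wd false n) := by
    intro n hodd h3
    have hL := Lop_coeff_of K r false (wd false (n+1)) (wd true n)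
      (by simpa using locL r false n h3) c
    have hR := Rop_coeff_of K r false (wd false (n+1)) (wd false n)
      (locR_some r false n h3 hodd) c
    rw [hcomm false] at hL
    exact hL.symm.trans hR
  have con2 : ∀ n, n % 2 = 0 → n+3 ≤ 2*r → c (wd true n) = 0 := by
    intro n hev h3
    have hL := Lop_coeff_of K r false (wd false (n+1)) (wd true n)
      (by simpa using locL r false n h3) c
    have hR := Rop_coeff_none K r false (wd false (n+1)) (locR_none r false n hev) c
    rw [hcomm false] at hL
    exact hL.symm.trans hR
  have con3 : ∀ n, n % 2 = 0 → n+3 ≤ 2*r → c (wd false n) = 0 := by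
    intro n hev h3
    have hL := Lop_coeff_of K r true (wd true (n+1)) (wd false n)
      (by simpa using locL r true n h3) c
    have hR := Rop_coeff_none K r true (wd true (n+1)) (locR_none r true n hev) c
    rw [hcomm true] at hL
    exact hL.symm.trans hR
  have hxe : x = ∑ j, c (pick r j) • centerFam K r j := by
    have h1 : theta K r hr x = theta K r hr (∑ j, c (pick r j) • centerFam K r j) := by
      rw [map_sum]
      simp_rw [map_smul]
      ext i
      rw [Finsupp.finset_sum_apply]
      simp only [Finsupp.smul_apply, smul_eq_mul]
      simp_rw [D_eval K r hr]
      -- goal: c i = ∑ j, c (pick r j) * (if i = pick r j ∨ ... then 1 else 0)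
      cases i with
      | un =>
        rw [Finset.sum_eq_single (⟨0, by omega⟩ : Fin (r+3))]
        · rw [if_pos (Or.inl (by simp [pick])), mul_one]
          rfl
        · intro j _ hne
          have hj0 : (j:ℕ) ≠ 0 := fun h => hne (Fin.ext (by simpa using h))
          have hlt := j.isLt
          rw [if_neg, mul_zero]
          rintro (h | ⟨ha, hb, hcc⟩)
          · unfold pick at h
            split_ifs at h <;>
              first
                | exact Idx.noConfusion h
                | omega
                | (injection h with h1 h2; omega)
                | (injection h with h1 h2; exact Bool.noConfusion h1)
          · exact Idx.noConfusion hcc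
        · intro h; exact absurd (Finset.mem_univ _) h
      | om =>
        have hval : ((⟨r+2, by omega⟩ : Fin (r+3)) : ℕ) = r + 2 := rfl
        have hpk : pick r (⟨r+2, by omega⟩ : Fin (r+3)) = om := by
          unfold pick
          rw [hval, if_neg (by omega), if_neg (by omega), if_neg (by omega),
            if_neg (by omega)]
        rw [Finset.sum_eq_single (⟨r+2, by omega⟩ : Fin (r+3))]
        · rw [hpk, if_pos (Or.inl rfl), mul_one]
        · intro j _ hne
          have hlt := j.isLt
          have hj0 : (j:ℕ) ≠ r+2 := fun h => hne (Fin.ext (by simpa using h))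
          rw [if_neg, mul_zero]
          rintro (h | ⟨ha, hb, hcc⟩)
          · unfold pick at h
            split_ifs at h <;>
              first
                | exact Idx.noConfusion h
                | omega
                | (injection h with h1 h2; omega)
                | (injection h with h1 h2; exact Bool.noConfusion h1)
          · exact Idx.noConfusion hcc
        · intro h; exact absurd (Finset.mem_univ _) h
      | wd s n =>
        by_cases hgd : n + 2 ≤ 2*r
        · by_cases hpar : n % 2 = 1
          · -- n odd: contribution from j = (n+1)/2
            have hval : ((⟨(n+1)/2, by omega⟩ : Fin (r+3)) : ℕ) = (n+1)/2 := rfl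
            have hn2 : 2*((n+1)/2) - 1 = n := by omega
            have hpk : pick r (⟨(n+1)/2, by omega⟩ : Fin (r+3)) = wd false n := by
              unfold pick
              rw [hval, if_neg (by omega), if_pos (by omega), hn2]
            rw [Finset.sum_eq_single (⟨(n+1)/2, by omega⟩ : Fin (r+3))]
            · rw [hpk]
              cases s
              · rw [if_pos (Or.inl rfl), mul_one]
              · rw [if_pos (Or.inr ⟨by rw [hval]; omega, by rw [hval]; omega,
                  by rw [hval, hn2]⟩), mul_one]
                exact con1 n hpar (by omega)
            · intro j _ hne
              have hlt := j.isLt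
              have hjval : (j:ℕ) ≠ (n+1)/2 := fun h => hne (Fin.ext (by simpa using h))
              rw [if_neg, mul_zero]
              rintro (h | ⟨ha, hb, hcc⟩)
              · unfold pick at h
                split_ifs at h <;>
                  first
                    | exact Idx.noConfusion h
                    | omega
                    | (injection h with h1 h2; omega)
                    | (injection h with h1 h2; exact Bool.noConfusion h1)
              · rw [Idx.wd.injEq] at hcc
                obtain ⟨hs, hn⟩ := hcc
                omega
            · intro h; exact absurd (Finset.mem_univ _) h
          · -- n even
            have hpar0 : n % 2 = 0 := by omega
            by_cases hlast : n = 2*r-2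
            · cases s
              · have hval : ((⟨r, by omega⟩ : Fin (r+3)) : ℕ) = r := rfl
                have hpk : pick r (⟨r, by omega⟩ : Fin (r+3)) = wd false n := by
                  unfold pick
                  rw [hval, if_neg (by omega), if_neg (by omega), if_pos rfl,
                    show 2*r-2 = n from by omega]
                rw [Finset.sum_eq_single (⟨r, by omega⟩ : Fin (r+3))]
                · rw [hpk, if_pos (Or.inl rfl), mul_one]
                · intro j _ hne
                  have hlt := j.isLt
                  have hjval : (j:ℕ) ≠ r := fun h => hne (Fin.ext (by simpa using h))
                  rw [if_neg, mul_zero]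
                  rintro (h | ⟨ha, hb, hcc⟩)
                  · unfold pick at h
                    split_ifs at h <;>
                      first
                        | exact Idx.noConfusion h
                        | omega
                        | (injection h with h1 h2; omega)
                        | (injection h with h1 h2; exact Bool.noConfusion h1)
                  · rw [Idx.wd.injEq] at hcc
                    obtain ⟨hs, hn⟩ := hcc
                    exact Bool.noConfusion hs
                · intro h; exact absurd (Finset.mem_univ _) h
              · have hval : ((⟨r+1, by omega⟩ : Fin (r+3)) : ℕ) = r+1 := rfl
                have hpk : pick r (⟨r+1, by omega⟩ : Fin (r+3)) = wd true n := by
                  unfold pick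
                  rw [hval, if_neg (by omega), if_neg (by omega), if_neg (by omega),
                    if_pos rfl, show 2*r-2 = n from by omega]
                rw [Finset.sum_eq_single (⟨r+1, by omega⟩ : Fin (r+3))]
                · rw [hpk, if_pos (Or.inl rfl), mul_one]
                · intro j _ hne
                  have hlt := j.isLt
                  have hjval : (j:ℕ) ≠ r+1 := fun h => hne (Fin.ext (by simpa using h))
                  rw [if_neg, mul_zero]
                  rintro (h | ⟨ha, hb, hcc⟩)
                  · unfold pick at h
                    split_ifs at h <;>
                      first
                        | exact Idx.noConfusion h
                        | omega
                        | (injection h with h1 h2; omega)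
                        | (injection h with h1 h2; exact Bool.noConfusion h1)
                  · rw [Idx.wd.injEq] at hcc
                    obtain ⟨hs, hn⟩ := hcc
                    omega
                · intro h; exact absurd (Finset.mem_univ _) h
            · have hz : c (wd s n) = 0 := by
                cases s
                · exact con3 n hpar0 (by omega)
                · exact con2 n hpar0 (by omega)
              rw [hz]
              symm
              apply Finset.sum_eq_zero
              intro j _
              have hlt := j.isLt
              rw [if_neg, mul_zero]
              rintro (h | ⟨ha, hb, hcc⟩)
              · unfold pick at h
                split_ifs at h <;>
                  first
                    | exact Idx.noConfusion h
                    | omega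
                    | (injection h with h1 h2; omega)
                    | (injection h with h1 h2; exact Bool.noConfusion h1)
              · rw [Idx.wd.injEq] at hcc
                obtain ⟨hs, hn⟩ := hcc
                omega
        · have hz : c (wd s n) = theta K r hr x (wd s n) := rfl
          rw [hz, theta_good K r hr x (by exact fun h => hgd h)]
          symm
          apply Finset.sum_eq_zero
          intro j _
          have hlt := j.isLt
          rw [if_neg, mul_zero]
          rintro (h | ⟨ha, hb, hcc⟩)
          · unfold pick at h
            split_ifs at h <;>
              first
                | exact Idx.noConfusion h
                | omega
                | (injection h with h1 h2; omega)
                | (injection h with h1 h2; exact Bool.noConfusion h1)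
          · rw [Idx.wd.injEq] at hcc
            obtain ⟨hs, hn⟩ := hcc
            omega
    calc x = Psi K r (theta K r hr x) := (Psi_theta K r hr x).symm
      _ = Psi K r (theta K r hr (∑ j, c (pick r j) • centerFam K r j)) := congrArg (Psi K r) h1
      _ = ∑ j, c (pick r j) • centerFam K r j := Psi_theta K r hr _
  rw [hxe]
  exact Submodule.sum_mem _ fun j _ =>
    Submodule.smul_mem _ _ (Submodule.subset_span ⟨j, rfl⟩)

lemma span_eq_center (hr : 1 ≤ r) :
    Submodule.span K (Set.range (centerFam K r)) =
      Subalgebra.toSubmodule (Subalgebra.center K (Alg K r)) := by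
  apply le_antisymm
  · rw [Submodule.span_le]
    rintro z ⟨j, rfl⟩
    rw [SetLike.mem_coe, Subalgebra.mem_toSubmodule]
    exact cf_center K r hr j
  · exact center_le_span K r hr

end Stmt15

/-- The centre of `Γ(1,1;r)` has dimension `r+3`, with basis
`{1, (αβ)^k + (βα)^k (1 ≤ k ≤ r-1), (αβ)^{r-1}α, (βα)^{r-1}β, (αβ)^r}`. -/
theorem stmt15 (K : Type*) [Field K] (r : ℕ) (hr : 1 ≤ r) :
    Module.finrank K (Subalgebra.center K (RingQuot (gammaRelR K r))) = r + 3 ∧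
    LinearIndependent K (centerFam K r) ∧
    Submodule.span K (Set.range (centerFam K r)) =
      Subalgebra.toSubmodule (Subalgebra.center K (RingQuot (gammaRelR K r))) := by
  refine ⟨?_, Stmt15.cf_indep K r hr, Stmt15.span_eq_center K r hr⟩
  have h2 := finrank_span_eq_card (Stmt15.cf_indep K r hr)
  rw [Stmt15.span_eq_center K r hr, Fintype.card_fin] at h2
  exact h2
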